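/- If there exists a Hadamard matrix of size n+1, then the graph G_n contains a clique of size n. -/

import Mathlib

/-- A Hadamard matrix: entries in `{-1,1}` and pairwise orthogonal rows. -/
def IsHadamard {m : ℕ} (M : Matrix (Fin m) (Fin m) ℝ) : Prop :=
  (∀ i j, M i j = 1 ∨ M i j = -1) ∧ ∀ i j, i ≠ j → ∑ k, M i k * M j k = 0

/-- The graph `G_n`. -/
def Gn (n : ℕ) :
    SimpleGraph {x : Fin n → Bool // hammingDist x (fun _ => false) = (n + 1) / 2} :=
  SimpleGraph.fromRel (fun x y => hammingDist x.1 y.1 = (n + 1) / 2)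

private lemma count_neg_aux {m : ℕ} (f : Fin m → ℝ) (hf : ∀ k, f k = 1 ∨ f k = -1)
    (hs : ∑ k, f k = 0) :
    2 * (Finset.univ.filter fun k => f k = -1).card = m := by
  classical
  set A := Finset.univ.filter fun k => f k = -1 with hA
  have h1 : ∑ k ∈ A, f k = -(A.card : ℝ) := by
    rw [Finset.sum_congr rfl (fun k hk => (Finset.mem_filter.1 hk).2)]
    simp
    convert rfl
  have h2 : ∑ k ∈ Aᶜ, f k = (Aᶜ.card : ℝ) := by
    have hone : ∀ k ∈ Aᶜ, f k = 1 := by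
      intro k hk
      rcases hf k with h | h
      · exact h
      · exact absurd (Finset.mem_filter.2 ⟨Finset.mem_univ k, h⟩) (Finset.mem_compl.1 hk)
    rw [Finset.sum_congr rfl hone]
    simp
  have h3 : ∑ k ∈ A, f k + ∑ k ∈ Aᶜ, f k = 0 := by
    rw [Finset.sum_add_sum_compl]; exact hs
  have h4 : (A.card : ℝ) = (Aᶜ.card : ℝ) := by
    rw [h1, h2] at h3; linarith
  have h5 : A.card = Aᶜ.card := by exact_mod_cast h4
  have h6 : A.card + Aᶜ.card = m := by
    rw [Finset.card_add_card_compl]; simp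
  omega

private lemma succ_filter_card {n : ℕ} (P : Fin (n + 1) → Prop) [DecidablePred P]
    (h0 : ¬ P 0) :
    (Finset.univ.filter P).card = (Finset.univ.filter fun k : Fin n => P k.succ).card := by
  rw [Finset.card_filter, Finset.card_filter, Fin.sum_univ_succ, if_neg h0, zero_add]

theorem stmt_4 (n : ℕ) (hn : Odd n)
    (hH : ∃ M : Matrix (Fin (n + 1)) (Fin (n + 1)) ℝ, IsHadamard M) :
    ∃ s : Finset {x : Fin n → Bool // hammingDist x (fun _ => false) = (n + 1) / 2},
      (Gn n).IsNClique n s := by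
  classical
  obtain ⟨M, hM1, hM2⟩ := hH
  -- normalized matrix: first row and column all ones
  set N : Matrix (Fin (n + 1)) (Fin (n + 1)) ℝ :=
    fun i j => M i 0 * M 0 j * M 0 0 * M i j with hNdef
  have hNpm : ∀ i j, N i j = 1 ∨ N i j = -1 := by
    intro i j
    rcases hM1 i 0 with h1 | h1 <;> rcases hM1 0 j with h2 | h2 <;>
      rcases hM1 0 0 with h3 | h3 <;> rcases hM1 i j with h4 | h4 <;>
      simp [hNdef, h1, h2, h3, h4]
  have hNrow0 : ∀ j, N 0 j = 1 := by
    intro j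
    rcases hM1 0 0 with h3 | h3 <;> rcases hM1 0 j with h2 | h2 <;>
      simp [hNdef, h2, h3]
  have hNorth : ∀ i j, i ≠ j → ∑ k, N i k * N j k = 0 := by
    intro i j hij
    have key : ∀ k, N i k * N j k = (M i 0 * M j 0) * (M i k * M j k) := by
      intro k
      have h00 : M 0 0 * M 0 0 = 1 := by rcases hM1 0 0 with h | h <;> simp [h]
      have h0k : M 0 k * M 0 k = 1 := by rcases hM1 0 k with h | h <;> simp [h]
      have : N i k * N j k =
          (M 0 0 * M 0 0) * ((M 0 k * M 0 k) * ((M i 0 * M j 0) * (M i k * M j k))) := by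
        simp only [hNdef]; ring
      rw [this, h00, h0k, one_mul, one_mul]
    rw [Finset.sum_congr rfl (fun k _ => key k), ← Finset.mul_sum, hM2 i j hij, mul_zero]
  -- entries differ iff product is -1
  have hne_iff : ∀ i j k, (N i k ≠ N j k) ↔ N i k * N j k = -1 := by
    intro i j k
    rcases hNpm i k with h | h <;> rcases hNpm j k with h' | h' <;>
      simp [h, h'] <;> norm_num
  -- counting lemma for pairs of distinct rows
  have hcount : ∀ i j : Fin (n + 1), i ≠ j →
      2 * (Finset.univ.filter fun k : Fin n => N i k.succ ≠ N j k.succ).card = n + 1 := by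
    intro i j hij
    have hf : ∀ k, N i k * N j k = 1 ∨ N i k * N j k = -1 := by
      intro k
      rcases hNpm i k with h | h <;> rcases hNpm j k with h' | h' <;>
        simp [h, h']
    have hc := count_neg_aux (fun k => N i k * N j k) hf (hNorth i j hij)
    have hNcol0 : ∀ i, N i 0 = 1 := by
      intro i
      rcases hM1 i 0 with h1 | h1 <;> rcases hM1 0 0 with h3 | h3 <;>
        simp [hNdef, h1, h3]
    have h0 : ¬ (N i (0 : Fin (n + 1)) * N j (0 : Fin (n + 1)) = -1) := by
      rw [hNcol0, hNcol0]; norm_num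
    rw [succ_filter_card (fun k => N i k * N j k = -1) h0] at hc
    rw [← hc]
    congr 2
    apply Finset.filter_congr
    intro k _
    simp only [hne_iff, eq_iff_iff]
  -- the clique vertices
  have hwt : ∀ i : Fin n,
      hammingDist (fun k : Fin n => if N i.succ k.succ = -1 then true else false)
        (fun _ => false) = (n + 1) / 2 := by
    intro i
    have hc := hcount i.succ 0 (Fin.succ_ne_zero i)
    have heq : (Finset.univ.filter fun k : Fin n =>
        (if N i.succ k.succ = -1 then true else false) ≠ false)
        = Finset.univ.filter fun k : Fin n => N i.succ k.succ ≠ N 0 k.succ := by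
      apply Finset.filter_congr
      intro k _
      rw [hNrow0]
      rcases hNpm i.succ k.succ with h | h <;> simp [h] <;> norm_num
    have : hammingDist (fun k : Fin n => if N i.succ k.succ = -1 then true else false)
        (fun _ => false)
        = (Finset.univ.filter fun k : Fin n => N i.succ k.succ ≠ N 0 k.succ).card := by
      rw [← heq]; rfl
    omega
  set x : Fin n → {x : Fin n → Bool // hammingDist x (fun _ => false) = (n + 1) / 2} :=
    fun i => ⟨fun k => if N i.succ k.succ = -1 then true else false, hwt i⟩ with hxdef
  have hdist : ∀ i j : Fin n, i ≠ j →
      hammingDist (x i).1 (x j).1 = (n + 1) / 2 := by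
    intro i j hij
    have hc := hcount i.succ j.succ (fun h => hij (Fin.succ_injective n h))
    have heq : (Finset.univ.filter fun k : Fin n => (x i).1 k ≠ (x j).1 k)
        = Finset.univ.filter fun k : Fin n => N i.succ k.succ ≠ N j.succ k.succ := by
      apply Finset.filter_congr
      intro k _
      simp only [hxdef]
      rcases hNpm i.succ k.succ with h | h <;> rcases hNpm j.succ k.succ with h' | h' <;>
        simp [h, h'] <;> norm_num
    have hd : hammingDist (x i).1 (x j).1
        = (Finset.univ.filter fun k : Fin n => N i.succ k.succ ≠ N j.succ k.succ).card := by
      rw [← heq]; rfl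
    omega
  have hxinj : Function.Injective x := by
    intro i j hij
    by_contra hne
    have hd := hdist i j hne
    rw [hij] at hd
    rw [hammingDist_self] at hd
    omega
  refine ⟨Finset.univ.image x, ?_, ?_⟩
  · intro a ha b hb hab
    simp only [Finset.coe_image, Set.mem_image] at ha hb
    obtain ⟨i, _, rfl⟩ := ha
    obtain ⟨j, _, rfl⟩ := hb
    have hij : i ≠ j := fun h => hab (by rw [h])
    exact (SimpleGraph.fromRel_adj _ _ _).2 ⟨hab, Or.inl (hdist i j hij)⟩
  · rw [Finset.card_image_of_injective _ hxinj, Finset.card_univ, Fintype.card_fin]
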